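/- arXiv:1110.4329 — 3 statements merged into one kernel-verified Lean document; each statement's English description precedes it below -/
import Mathlib

section
/- For every n ≥ 4 there exists a family of n + 2 distinct unit spheres in ℝⁿ such that any n + 1 of them have a common point but all n + 2 of them do not have a common point. Precisely: there exists an injective map c : Fin (n+2) → ℝⁿ such that for every index i the intersection ⋂_{j ≠ i} {y : ‖y − c(j)‖ = 1} is nonempty, while ⋂_{j} {y : ‖y − c(j)‖ = 1} = ∅. (This disproves Maehara's conjecture for n ≥ 4.) -/
noncomputable section

/-- `B[X]`: the intersection of all closed unit balls centered at points of `X`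
(`Set.univ` when `X = ∅`). -/
def ballInter {n : ℕ} (X : Set (EuclideanSpace ℝ (Fin n))) :
    Set (EuclideanSpace ℝ (Fin n)) :=
  ⋂ x ∈ X, Metric.closedBall x 1

/-- The closed spindle `[a,b]_s`: `B[B[{a,b}]]` if `dist a b ≤ 2`, all of the space
otherwise. -/
def spindle {n : ℕ} (a b : EuclideanSpace ℝ (Fin n)) :
    Set (EuclideanSpace ℝ (Fin n)) :=
  if dist a b ≤ 2 then ballInter (ballInter {a, b}) else Set.univ

/-- A set is spindle convex if it contains the closed spindle of any two of its points. -/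
def SpindleConvex {n : ℕ} (C : Set (EuclideanSpace ℝ (Fin n))) : Prop :=
  ∀ a ∈ C, ∀ b ∈ C, spindle a b ⊆ C

/-- The spindle convex hull: the intersection of all spindle convex sets containing `X`. -/
def spindleHull {n : ℕ} (X : Set (EuclideanSpace ℝ (Fin n))) :
    Set (EuclideanSpace ℝ (Fin n)) :=
  ⋂₀ {C : Set (EuclideanSpace ℝ (Fin n)) | X ⊆ C ∧ SpindleConvex C}

/-- Arc-distance `ρ(a,b) = 2 · arcsin(‖a - b‖ / 2)`. -/
def arcDist {n : ℕ} (a b : EuclideanSpace ℝ (Fin n)) : ℝ :=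
  2 * Real.arcsin (dist a b / 2)

lemma mc_exists_params (N : ℝ) (hN : 4 ≤ N) :
    ∃ τ r s : ℝ, 0 < τ ∧ τ < 1 ∧ 0 ≤ r ∧ s ≤ 0 ∧ r ^ 2 = 1 - τ ^ 2 ∧
      s ^ 2 = τ * (2 - τ) ∧ r * s = -((N - 1) * (τ * (1 - τ))) := by
  set m : ℝ := N * (N - 2) with hmdef
  have hm8 : 8 ≤ m := by nlinarith
  have hm0 : 0 < m := by linarith
  have harg : 0 ≤ 1 - 8 / m := by
    rw [sub_nonneg, div_le_one hm0]; linarith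
  set D : ℝ := Real.sqrt (1 - 8 / m) with hDdef
  have hD0 : 0 ≤ D := Real.sqrt_nonneg _
  have hD2 : D ^ 2 = 1 - 8 / m := Real.sq_sqrt harg
  have hD1 : D < 1 := by nlinarith [div_pos (by norm_num : (0:ℝ) < 8) hm0]
  set τ : ℝ := (1 - D) / 2 with hτdef
  have hτ0 : 0 < τ := by rw [hτdef]; linarith
  have hτ1 : τ < 1 := by rw [hτdef]; linarith
  have hkey : m * (τ * (1 - τ)) = 2 := by
    have h : τ * (1 - τ) = (1 - D ^ 2) / 4 := by rw [hτdef]; ring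
    rw [h, hD2]
    field_simp
    ring
  have h1τ2 : 0 ≤ 1 - τ ^ 2 := by nlinarith
  have hτ2τ : 0 ≤ τ * (2 - τ) := by nlinarith
  set r : ℝ := Real.sqrt (1 - τ ^ 2) with hrdef
  set s : ℝ := -Real.sqrt (τ * (2 - τ)) with hsdef
  have hr2 : r ^ 2 = 1 - τ ^ 2 := Real.sq_sqrt h1τ2
  have hs2 : s ^ 2 = τ * (2 - τ) := by rw [hsdef, neg_pow]; simp [Real.sq_sqrt hτ2τ]
  refine ⟨τ, r, s, hτ0, hτ1, Real.sqrt_nonneg _, neg_nonpos.mpr (Real.sqrt_nonneg _),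
    hr2, hs2, ?_⟩
  have hprod : r * s = -Real.sqrt ((1 - τ ^ 2) * (τ * (2 - τ))) := by
    rw [hrdef, hsdef, mul_neg, ← Real.sqrt_mul h1τ2]
  rw [hprod, neg_inj]
  have hrhs0 : 0 ≤ (N - 1) * (τ * (1 - τ)) := by nlinarith
  have heq : (1 - τ ^ 2) * (τ * (2 - τ)) = ((N - 1) * (τ * (1 - τ))) ^ 2 := by
    have hNm : (N - 1) ^ 2 = m + 1 := by rw [hmdef]; ring
    nlinarith [hkey, hNm]
  rw [heq, Real.sqrt_sq hrhs0]

lemma mc_exists_params' (N : ℝ) (hN : 4 ≤ N) :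
    ∃ A P T G : ℝ, A < 0 ∧ 0 < T ∧
      P ^ 2 + A ^ 2 - (P - A) ^ 2 / N = 1 ∧
      P ^ 2 * (N - 1) / N + N * T ^ 2 = 1 ∧
      N * G ^ 2 + A ^ 2 * (N - 1) / N = 1 ∧
      N * (G - T) ^ 2 = 1 ∧
      A ^ 2 * (N - 1) / N ≠ N * T ^ 2 := by
  obtain ⟨τ, r, s, hτ0, hτ1, hr0, hs0, hr2, hs2, hrs⟩ := mc_exists_params N hN
  have hN0 : (0:ℝ) < N := by linarith
  have hN1 : (0:ℝ) < N - 1 := by linarith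
  have hw0 : (0:ℝ) < Real.sqrt N := Real.sqrt_pos.mpr hN0
  have hw2 : Real.sqrt N ^ 2 = N := Real.sq_sqrt hN0.le
  have hγ0 : (0:ℝ) < Real.sqrt (N / (N - 1)) := Real.sqrt_pos.mpr (by positivity)
  have hγ2 : Real.sqrt (N / (N - 1)) ^ 2 = N / (N - 1) :=
    Real.sq_sqrt (by positivity)
  have hsneg : s < 0 := by
    rcases lt_or_eq_of_le hs0 with h | h
    · exact h
    · exfalso; rw [h] at hs2; nlinarith
  refine ⟨s * Real.sqrt (N / (N - 1)), r * Real.sqrt (N / (N - 1)),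
    τ / Real.sqrt N, (τ - 1) / Real.sqrt N,
    mul_neg_of_neg_of_pos hsneg hγ0, by positivity, ?_, ?_, ?_, ?_, ?_⟩
  · have hexp : (r * Real.sqrt (N / (N - 1)) - s * Real.sqrt (N / (N - 1))) ^ 2
        = (r ^ 2 - 2 * (r * s) + s ^ 2) * Real.sqrt (N / (N - 1)) ^ 2 := by ring
    rw [hexp, mul_pow, mul_pow, hγ2, hr2, hs2, hrs]
    field_simp
    ring
  · rw [mul_pow, div_pow, hγ2, hr2, hw2]
    field_simp
    ring
  · rw [mul_pow, div_pow, hγ2, hs2, hw2]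
    field_simp
    ring
  · rw [div_sub_div_same, div_pow, hw2]
    field_simp
    ring
  · rw [mul_pow, div_pow, hγ2, hs2, hw2]
    intro heq
    have h2 : τ * (2 - τ) = τ ^ 2 := by
      field_simp at heq
      nlinarith [heq]
    nlinarith

lemma mc_dist_eq_one_iff {n : ℕ} (x y : EuclideanSpace ℝ (Fin n)) :
    dist x y = 1 ↔ ∑ j : Fin n, (x j - y j) ^ 2 = 1 := by
  rw [EuclideanSpace.dist_eq, Real.sqrt_eq_one]
  simp [Real.dist_eq, sq_abs]

lemma mc_sum_ind1 {n : ℕ} (i : Fin n) (α δ : ℝ) :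
    ∑ j : Fin n, ((if j = i then α else 0) + δ) ^ 2
      = (n : ℝ) * δ ^ 2 + α ^ 2 + 2 * α * δ := by
  have h : ∀ j : Fin n, ((if j = i then α else 0) + δ) ^ 2
      = δ ^ 2 + (if j = i then α ^ 2 + 2 * α * δ else 0) := by
    intro j; by_cases hj : j = i <;> simp [hj] <;> ring
  simp only [h, Finset.sum_add_distrib, Finset.sum_const, Finset.sum_ite_eq',
    Finset.mem_univ, if_true, Finset.card_univ, Fintype.card_fin, nsmul_eq_mul]
  ring

lemma mc_sum_ind2 {n : ℕ} (i k : Fin n) (hik : i ≠ k) (α β δ : ℝ) :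
    ∑ j : Fin n, ((if j = i then α else 0) + (if j = k then β else 0) + δ) ^ 2
      = (n : ℝ) * δ ^ 2 + α ^ 2 + 2 * α * δ + β ^ 2 + 2 * β * δ := by
  have h : ∀ j : Fin n, ((if j = i then α else 0) + (if j = k then β else 0) + δ) ^ 2
      = δ ^ 2 + (if j = i then α ^ 2 + 2 * α * δ else 0)
        + (if j = k then β ^ 2 + 2 * β * δ else 0) := by
    intro j
    by_cases hji : j = i
    · subst hji; rw [if_neg hik, if_pos rfl, if_pos rfl, if_neg hik]; ring
    · by_cases hjk : j = k <;> simp [hji, hjk, hik.symm] <;> ring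
  simp only [h, Finset.sum_add_distrib, Finset.sum_const, Finset.sum_ite_eq',
    Finset.mem_univ, if_true, Finset.card_univ, Fintype.card_fin, nsmul_eq_mul]
  ring

theorem maehara_conjecture_counterexample (n : ℕ) (hn : 4 ≤ n) :
    ∃ c : Fin (n + 2) → EuclideanSpace ℝ (Fin n), Function.Injective c ∧
      (∀ i : Fin (n + 2),
        (⋂ j : Fin (n + 2), ⋂ (_ : j ≠ i), Metric.sphere (c j) 1).Nonempty) ∧
      (⋂ j : Fin (n + 2), Metric.sphere (c j) 1) = ∅ := by
  classical
  have hN : (4:ℝ) ≤ (n:ℝ) := by exact_mod_cast hn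
  have hN0 : (0:ℝ) < (n:ℝ) := by linarith
  have hNne : ((n:ℝ)) ≠ 0 := ne_of_gt hN0
  obtain ⟨A, P, T, G, hA, hT, h1, h2, h3, h4, h5⟩ := mc_exists_params' (n:ℝ) hN
  set B : ℝ := -A / (n:ℝ) with hB
  set Q : ℝ := -P / (n:ℝ) with hQ
  set c : Fin (n+2) → EuclideanSpace ℝ (Fin n) := fun i =>
    if (i:ℕ) < n then WithLp.toLp 2 (fun x : Fin n => (if (x:ℕ) = (i:ℕ) then A else 0) + B)
    else if (i:ℕ) = n then WithLp.toLp 2 (fun _ : Fin n => -T) else WithLp.toLp 2 (fun _ : Fin n => T)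
    with hc
  have hc_sim : ∀ (i : Fin (n+2)) (hi : (i:ℕ) < n) (x : Fin n),
      c i x = (if x = (⟨(i:ℕ), hi⟩ : Fin n) then A else 0) + B := by
    intro i hi x
    show (if (i:ℕ) < n then WithLp.toLp 2 (fun x : Fin n => (if (x:ℕ) = (i:ℕ) then A else 0) + B)
      else if (i:ℕ) = n then WithLp.toLp 2 (fun _ : Fin n => -T) else WithLp.toLp 2 (fun _ : Fin n => T)) x = _
    rw [if_pos hi]
    exact congrArg (· + B) (if_congr (by simp [Fin.ext_iff]) rfl rfl)
  have hc_bot : ∀ (i : Fin (n+2)), (i:ℕ) = n → ∀ x : Fin n, c i x = -T := by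
    intro i hi x
    show (if (i:ℕ) < n then WithLp.toLp 2 (fun x : Fin n => (if (x:ℕ) = (i:ℕ) then A else 0) + B)
      else if (i:ℕ) = n then WithLp.toLp 2 (fun _ : Fin n => -T) else WithLp.toLp 2 (fun _ : Fin n => T)) x = _
    rw [if_neg (by omega), if_pos hi]
  have hc_top : ∀ (i : Fin (n+2)), ¬ (i:ℕ) < n → (i:ℕ) ≠ n → ∀ x : Fin n, c i x = T := by
    intro i hi hi' x
    show (if (i:ℕ) < n then WithLp.toLp 2 (fun x : Fin n => (if (x:ℕ) = (i:ℕ) then A else 0) + B)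
      else if (i:ℕ) = n then WithLp.toLp 2 (fun _ : Fin n => -T) else WithLp.toLp 2 (fun _ : Fin n => T)) x = _
    rw [if_neg hi, if_neg hi']
  -- scalar identities
  have e1 : (n:ℝ) * (Q - B) ^ 2 + P ^ 2 + 2 * P * (Q - B) + (-A) ^ 2
      + 2 * (-A) * (Q - B) = 1 := by
    rw [hB, hQ]
    field_simp
    field_simp at h1
    linear_combination h1
  have e2 : (n:ℝ) * (Q + T) ^ 2 + P ^ 2 + 2 * P * (Q + T) = 1 := by
    rw [hQ]
    field_simp
    field_simp at h2
    linear_combination h2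
  have e3 : (n:ℝ) * (Q - T) ^ 2 + P ^ 2 + 2 * P * (Q - T) = 1 := by
    rw [hQ]
    field_simp
    field_simp at h2
    linear_combination h2
  have e4 : (n:ℝ) * (G - B) ^ 2 + (-A) ^ 2 + 2 * (-A) * (G - B) = 1 := by
    rw [hB]
    field_simp
    field_simp at h3
    linear_combination h3
  have e5 : (n:ℝ) * (-G - B) ^ 2 + (-A) ^ 2 + 2 * (-A) * (-G - B) = 1 := by
    rw [hB]
    field_simp
    field_simp at h3
    linear_combination h3
  have e6 : (n:ℝ) * (G - T) ^ 2 = 1 := h4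
  have e7 : (n:ℝ) * (-G - -T) ^ 2 = 1 := by
    rw [show (-G - -T) ^ 2 = (G - T) ^ 2 by ring]; exact h4
  refine ⟨c, ?_, ?_, ?_⟩
  · -- injectivity
    intro i i' heq
    by_contra hne
    have hvne : (i:ℕ) ≠ (i':ℕ) := fun h => hne (Fin.ext h)
    have hx0 : (0:ℕ) < n := by omega
    -- helper: a coordinate different from a given one
    have hother : ∀ k : Fin n, ∃ x : Fin n, x ≠ k := by
      intro k
      by_cases hk : k = (⟨0, hx0⟩ : Fin n)
      · exact ⟨⟨1, by omega⟩, by rw [hk]; simp [Fin.ext_iff]⟩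
      · exact ⟨⟨0, hx0⟩, fun h => hk h.symm⟩
    by_cases hi : (i:ℕ) < n <;> by_cases hi' : (i':ℕ) < n
    · -- both simplex
      have k1 := congrFun (congrArg WithLp.ofLp heq) (⟨(i:ℕ), hi⟩ : Fin n)
      rw [hc_sim i hi, hc_sim i' hi', if_pos rfl,
        if_neg (fun h => hvne (by simpa [Fin.ext_iff] using h))] at k1
      linarith
    · -- i simplex, i' pole
      obtain ⟨x1, hx1⟩ := hother ⟨(i:ℕ), hi⟩
      have hconst : ∀ x : Fin n, c i' x = c i' x1 := by
        intro x
        by_cases hb : (i':ℕ) = n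
        · rw [hc_bot i' hb, hc_bot i' hb]
        · rw [hc_top i' hi' hb, hc_top i' hi' hb]
      have k1 := congrFun (congrArg WithLp.ofLp heq) (⟨(i:ℕ), hi⟩ : Fin n)
      have k2 := congrFun (congrArg WithLp.ofLp heq) x1
      rw [hc_sim i hi, if_pos rfl, hconst ⟨(i:ℕ), hi⟩] at k1
      rw [hc_sim i hi, if_neg hx1] at k2
      linarith [k1, k2]
    · -- i pole, i' simplex
      obtain ⟨x1, hx1⟩ := hother ⟨(i':ℕ), hi'⟩
      have hconst : ∀ x : Fin n, c i x = c i x1 := by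
        intro x
        by_cases hb : (i:ℕ) = n
        · rw [hc_bot i hb, hc_bot i hb]
        · rw [hc_top i hi hb, hc_top i hi hb]
      have k1 := congrFun (congrArg WithLp.ofLp heq) (⟨(i':ℕ), hi'⟩ : Fin n)
      have k2 := congrFun (congrArg WithLp.ofLp heq) x1
      rw [hc_sim i' hi', if_pos rfl, hconst ⟨(i':ℕ), hi'⟩] at k1
      rw [hc_sim i' hi', if_neg hx1] at k2
      linarith [k1, k2]
    · -- both poles
      have hii : (i:ℕ) = n ∨ (i:ℕ) = n + 1 := by omega
      have hii' : (i':ℕ) = n ∨ (i':ℕ) = n + 1 := by omega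
      have k1 := congrFun (congrArg WithLp.ofLp heq) (⟨0, hx0⟩ : Fin n)
      rcases hii with hb | ht <;> rcases hii' with hb' | ht'
      · exact hvne (hb.trans hb'.symm)
      · rw [hc_bot i hb, hc_top i' hi' (by omega)] at k1; linarith
      · rw [hc_top i hi (by omega), hc_bot i' hb'] at k1; linarith
      · exact hvne (ht.trans ht'.symm)
  · -- any n+1 have a common point
    intro i
    refine ⟨if (i:ℕ) < n then WithLp.toLp 2 (fun x : Fin n => (if (x:ℕ) = (i:ℕ) then P else 0) + Q)
      else if (i:ℕ) = n then WithLp.toLp 2 (fun _ : Fin n => G) else WithLp.toLp 2 (fun _ : Fin n => -G), ?_⟩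
    simp only [Set.mem_iInter, Metric.mem_sphere]
    intro j hj
    have hvne : (j:ℕ) ≠ (i:ℕ) := fun h => hj (Fin.ext h)
    rw [mc_dist_eq_one_iff]
    by_cases hi : (i:ℕ) < n
    · rw [if_pos hi]
      by_cases hjn : (j:ℕ) < n
      · -- sim witness vs sim center
        have hij : (⟨(i:ℕ), hi⟩ : Fin n) ≠ ⟨(j:ℕ), hjn⟩ := by
          simp only [ne_eq, Fin.mk.injEq]; omega
        calc ∑ x : Fin n, ((fun x : Fin n => (if (x:ℕ) = (i:ℕ) then P else 0) + Q) x
              - c j x) ^ 2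
            = ∑ x : Fin n, ((if x = (⟨(i:ℕ), hi⟩ : Fin n) then P else 0)
              + (if x = (⟨(j:ℕ), hjn⟩ : Fin n) then -A else 0) + (Q - B)) ^ 2 := by
              refine Finset.sum_congr rfl fun x _ => ?_
              rw [hc_sim j hjn x]
              have hxi : ((x:ℕ) = (i:ℕ)) = (x = (⟨(i:ℕ), hi⟩ : Fin n)) := by
                simp [Fin.ext_iff]
              have hxj' : (if x = (⟨(j:ℕ), hjn⟩ : Fin n) then A else 0)
                  = -(if x = (⟨(j:ℕ), hjn⟩ : Fin n) then -A else 0) := by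
                split <;> ring
              simp only [hxi]
              rw [hxj']
              ring
          _ = (n:ℝ) * (Q - B) ^ 2 + P ^ 2 + 2 * P * (Q - B) + (-A) ^ 2
              + 2 * (-A) * (Q - B) :=
              mc_sum_ind2 _ _ hij P (-A) (Q - B)
          _ = 1 := e1
      · -- sim witness vs pole center
        by_cases hjb : (j:ℕ) = n
        · calc ∑ x : Fin n, ((fun x : Fin n => (if (x:ℕ) = (i:ℕ) then P else 0) + Q) x
                - c j x) ^ 2
              = ∑ x : Fin n, ((if x = (⟨(i:ℕ), hi⟩ : Fin n) then P else 0) + (Q + T)) ^ 2 := by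
                refine Finset.sum_congr rfl fun x _ => ?_
                rw [hc_bot j hjb x]
                have hxi : ((x:ℕ) = (i:ℕ)) = (x = (⟨(i:ℕ), hi⟩ : Fin n)) := by
                  simp [Fin.ext_iff]
                simp only [hxi]
                ring
            _ = (n:ℝ) * (Q + T) ^ 2 + P ^ 2 + 2 * P * (Q + T) := mc_sum_ind1 _ P (Q + T)
            _ = 1 := e2
        · calc ∑ x : Fin n, ((fun x : Fin n => (if (x:ℕ) = (i:ℕ) then P else 0) + Q) x
                - c j x) ^ 2
              = ∑ x : Fin n, ((if x = (⟨(i:ℕ), hi⟩ : Fin n) then P else 0) + (Q - T)) ^ 2 := by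
                refine Finset.sum_congr rfl fun x _ => ?_
                rw [hc_top j hjn hjb x]
                have hxi : ((x:ℕ) = (i:ℕ)) = (x = (⟨(i:ℕ), hi⟩ : Fin n)) := by
                  simp [Fin.ext_iff]
                simp only [hxi]
                ring
            _ = (n:ℝ) * (Q - T) ^ 2 + P ^ 2 + 2 * P * (Q - T) := mc_sum_ind1 _ P (Q - T)
            _ = 1 := e3
    · rw [if_neg hi]
      by_cases hib : (i:ℕ) = n
      · -- bottom witness G
        rw [if_pos hib]
        by_cases hjn : (j:ℕ) < n
        · calc ∑ x : Fin n, ((fun _ : Fin n => G) x - c j x) ^ 2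
              = ∑ x : Fin n, ((if x = (⟨(j:ℕ), hjn⟩ : Fin n) then -A else 0) + (G - B)) ^ 2 := by
                refine Finset.sum_congr rfl fun x _ => ?_
                rw [hc_sim j hjn x]
                split <;> ring
            _ = (n:ℝ) * (G - B) ^ 2 + (-A) ^ 2 + 2 * (-A) * (G - B) :=
                mc_sum_ind1 _ (-A) (G - B)
            _ = 1 := e4
        · have hjt : (j:ℕ) ≠ n := by omega
          calc ∑ x : Fin n, ((fun _ : Fin n => G) x - c j x) ^ 2
              = ∑ x : Fin n, (G - T) ^ 2 := by
                refine Finset.sum_congr rfl fun x _ => ?_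
                rw [hc_top j hjn hjt x]
            _ = (n:ℝ) * (G - T) ^ 2 := by
                rw [Finset.sum_const, Finset.card_univ, Fintype.card_fin, nsmul_eq_mul]
            _ = 1 := e6
      · -- top witness -G
        rw [if_neg hib]
        by_cases hjn : (j:ℕ) < n
        · calc ∑ x : Fin n, ((fun _ : Fin n => -G) x - c j x) ^ 2
              = ∑ x : Fin n, ((if x = (⟨(j:ℕ), hjn⟩ : Fin n) then -A else 0) + (-G - B)) ^ 2 := by
                refine Finset.sum_congr rfl fun x _ => ?_
                rw [hc_sim j hjn x]
                split <;> ring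
            _ = (n:ℝ) * (-G - B) ^ 2 + (-A) ^ 2 + 2 * (-A) * (-G - B) :=
                mc_sum_ind1 _ (-A) (-G - B)
            _ = 1 := e5
        · have hjb : (j:ℕ) = n := by omega
          calc ∑ x : Fin n, ((fun _ : Fin n => -G) x - c j x) ^ 2
              = ∑ x : Fin n, (-G - -T) ^ 2 := by
                refine Finset.sum_congr rfl fun x _ => ?_
                rw [hc_bot j hjb x]
            _ = (n:ℝ) * (-G - -T) ^ 2 := by
                rw [Finset.sum_const, Finset.card_univ, Fintype.card_fin, nsmul_eq_mul]
            _ = 1 := e7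
  · -- all n+2 have empty intersection
    rw [Set.eq_empty_iff_forall_notMem]
    intro z hz
    simp only [Set.mem_iInter, Metric.mem_sphere] at hz
    have hz' : ∀ j : Fin (n+2), ∑ x : Fin n, (z x - c j x) ^ 2 = 1 :=
      fun j => (mc_dist_eq_one_iff _ _).mp (hz j)
    set S : ℝ := ∑ x : Fin n, z x with hS
    set Q0 : ℝ := ∑ x : Fin n, (z x) ^ 2 with hQ0
    have hexpand : ∀ u : ℝ, ∑ x : Fin n, (z x + u) ^ 2
        = Q0 + 2 * u * S + (n:ℝ) * u ^ 2 := by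
      intro u
      have hpt : ∀ x : Fin n, (z x + u) ^ 2 = (z x) ^ 2 + (2 * u * z x + u ^ 2) :=
        fun x => by ring
      rw [Finset.sum_congr rfl fun x _ => hpt x, Finset.sum_add_distrib,
        Finset.sum_add_distrib, Finset.sum_const, Finset.card_univ, Fintype.card_fin,
        nsmul_eq_mul, ← Finset.mul_sum]
      rw [hQ0, hS]
      ring
    -- bottom pole equation
    have hbot : Q0 + 2 * T * S + (n:ℝ) * T ^ 2 = 1 := by
      have h := hz' ⟨n, by omega⟩
      have hcb : ∀ x : Fin n, c ⟨n, by omega⟩ x = -T := hc_bot _ rfl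
      rw [← h, ← hexpand T]
      refine Finset.sum_congr rfl fun x _ => ?_
      rw [hcb x]; ring
    have htop : Q0 + 2 * (-T) * S + (n:ℝ) * (-T) ^ 2 = 1 := by
      have h := hz' ⟨n+1, by omega⟩
      have hct : ∀ x : Fin n, c ⟨n+1, by omega⟩ x = T :=
        hc_top _ (show ¬ n + 1 < n by omega) (show n + 1 ≠ n by omega)
      rw [← h, ← hexpand (-T)]
      refine Finset.sum_congr rfl fun x _ => ?_
      rw [hct x]; ring
    have hS0 : S = 0 := by
      have hTS : T * S = 0 := by linarith
      rcases mul_eq_zero.mp hTS with h | h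
      · exact absurd h (ne_of_gt hT)
      · exact h
    -- simplex equations
    have hsimp : ∀ k : Fin n,
        (∑ x : Fin n, (z x - B) ^ 2) + (A ^ 2 - 2 * A * (z k - B)) = 1 := by
      intro k
      have h := hz' ⟨(k:ℕ), by omega⟩
      have hcs : ∀ x : Fin n, c ⟨(k:ℕ), by omega⟩ x = (if x = k then A else 0) + B := by
        intro x
        rw [hc_sim ⟨(k:ℕ), by omega⟩ (by simp) x]
      calc (∑ x : Fin n, (z x - B) ^ 2) + (A ^ 2 - 2 * A * (z k - B))
          = ∑ x : Fin n, ((z x - B) ^ 2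
              + (if x = k then A ^ 2 - 2 * A * (z x - B) else 0)) := by
            rw [Finset.sum_add_distrib, Finset.sum_ite_eq' Finset.univ k
              (fun x => A ^ 2 - 2 * A * (z x - B))]
            simp
        _ = ∑ x : Fin n, (z x - c ⟨(k:ℕ), by omega⟩ x) ^ 2 := by
            refine Finset.sum_congr rfl fun x _ => ?_
            rw [hcs x]
            by_cases hx : x = k <;> simp [hx] <;> ring
        _ = 1 := h
    -- sum the simplex equations over k
    have hbig : (n:ℝ) * ((∑ x : Fin n, (z x - B) ^ 2) + A ^ 2)
        - 2 * A * (S - (n:ℝ) * B) = (n:ℝ) := by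
      have h := Finset.sum_congr rfl (fun k (_ : k ∈ Finset.univ) => hsimp k)
      have hL : ∑ k : Fin n, ((∑ x : Fin n, (z x - B) ^ 2) + (A ^ 2 - 2 * A * (z k - B)))
          = (n:ℝ) * ((∑ x : Fin n, (z x - B) ^ 2) + A ^ 2) - 2 * A * (S - (n:ℝ) * B) := by
        rw [Finset.sum_add_distrib, Finset.sum_sub_distrib, Finset.sum_const,
          Finset.sum_const, ← Finset.mul_sum, Finset.card_univ, Fintype.card_fin,
          nsmul_eq_mul, nsmul_eq_mul]
        rw [show ∑ k : Fin n, (z k - B) = S - (n:ℝ) * B by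
          rw [Finset.sum_sub_distrib, Finset.sum_const, Finset.card_univ,
            Fintype.card_fin, nsmul_eq_mul]]
        ring
      rw [hL] at h
      rw [h]
      simp
    have hR : (∑ x : Fin n, (z x - B) ^ 2) = Q0 + 2 * (-B) * S + (n:ℝ) * (-B) ^ 2 := by
      rw [← hexpand (-B)]
      refine Finset.sum_congr rfl fun x _ => ?_
      ring
    -- contradiction with h5
    apply h5
    rw [hR] at hbig
    rw [hS0] at hbig hbot
    have hQ0v : Q0 = 1 - (n:ℝ) * T ^ 2 := by linarith
    rw [hQ0v] at hbig
    have hnB : (n:ℝ) * B = -A := by rw [hB]; field_simp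
    rw [div_eq_iff hNne]
    linear_combination hbig - (A + (n:ℝ) * B) * hnB
end
end

section
/- Let ι be a finite index set and let f, g : ι → ℝⁿ be such that g is a contraction of f, i.e. ‖g(i) − g(j)‖ ≤ ‖f(i) − f(j)‖ for all i, j ∈ ι, and suppose the points f(i) all lie in some closed unit ball. Then the inradius of B[g(ι)] is at least the inradius of B[f(ι)]: for every r ≥ 0, if there exists p ∈ ℝⁿ with {y : ‖y − p‖ ≤ r} ⊆ ⋂_{i ∈ ι} {y : ‖y − f(i)‖ ≤ 1}, then there exists p' ∈ ℝⁿ with {y : ‖y − p'‖ ≤ r} ⊆ ⋂_{i ∈ ι} {y : ‖y − g(i)‖ ≤ 1}. -/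
noncomputable section

open Finset
open scoped RealInnerProductSpace

section Aux

variable {ι : Type} [Fintype ι] {E : Type*} [NormedAddCommGroup E] [InnerProductSpace ℝ E]

lemma aux_centroid (w : ι → ℝ) (hw : ∑ i, w i = 1) (x : ι → E) :
    ∑ i, w i • (x i - ∑ j, w j • x j) = (0 : E) := by
  simp only [smul_sub, Finset.sum_sub_distrib, ← Finset.sum_smul, hw, one_smul, sub_self]

lemma aux_pa (w : ι → ℝ) (hw : ∑ i, w i = 1) (x : ι → E) (q : E) :
    ∑ i, w i * ‖x i - q‖ ^ 2
      = ∑ i, w i * ‖x i - (∑ j, w j • x j)‖ ^ 2 + ‖(∑ j, w j • x j) - q‖ ^ 2 := by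
  set c : E := ∑ j, w j • x j with hc
  have key : ∀ i, w i * ‖x i - q‖ ^ 2
      = w i * ‖x i - c‖ ^ 2 + 2 * ⟪w i • (x i - c), c - q⟫ + w i * ‖c - q‖ ^ 2 := by
    intro i
    have h1 : x i - q = (x i - c) + (c - q) := by abel
    rw [h1, norm_add_sq_real, real_inner_smul_left]
    ring
  calc ∑ i, w i * ‖x i - q‖ ^ 2
      = ∑ i, (w i * ‖x i - c‖ ^ 2 + 2 * ⟪w i • (x i - c), c - q⟫ + w i * ‖c - q‖ ^ 2) :=
        Finset.sum_congr rfl fun i _ => key i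
    _ = (∑ i, w i * ‖x i - c‖ ^ 2) + 2 * ⟪∑ i, w i • (x i - c), c - q⟫
          + (∑ i, w i) * ‖c - q‖ ^ 2 := by
        rw [Finset.sum_add_distrib, Finset.sum_add_distrib, sum_inner, Finset.sum_mul,
          Finset.mul_sum]
    _ = ∑ i, w i * ‖x i - c‖ ^ 2 + ‖c - q‖ ^ 2 := by
        rw [aux_centroid w hw x, inner_zero_left, hw]; ring

lemma aux_double (w : ι → ℝ) (hw : ∑ i, w i = 1) (x : ι → E) :
    ∑ i, w i * (∑ j, w j * ‖x i - x j‖ ^ 2)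
      = 2 * ∑ i, w i * ‖x i - (∑ j, w j • x j)‖ ^ 2 := by
  set c : E := ∑ j, w j • x j with hc
  have key : ∀ i, (∑ j, w j * ‖x i - x j‖ ^ 2)
      = (∑ j, w j * ‖x j - c‖ ^ 2) + ‖x i - c‖ ^ 2 := by
    intro i
    have : ∑ j, w j * ‖x i - x j‖ ^ 2 = ∑ j, w j * ‖x j - x i‖ ^ 2 :=
      Finset.sum_congr rfl fun j _ => by rw [norm_sub_rev]
    rw [this, aux_pa w hw x (x i), norm_sub_rev]
  calc ∑ i, w i * (∑ j, w j * ‖x i - x j‖ ^ 2)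
      = ∑ i, (w i * (∑ j, w j * ‖x j - c‖ ^ 2) + w i * ‖x i - c‖ ^ 2) :=
        Finset.sum_congr rfl fun i _ => by rw [key i]; ring
    _ = (∑ i, w i) * (∑ j, w j * ‖x j - c‖ ^ 2) + ∑ i, w i * ‖x i - c‖ ^ 2 := by
        rw [Finset.sum_add_distrib, Finset.sum_mul]
    _ = 2 * ∑ i, w i * ‖x i - c‖ ^ 2 := by rw [hw]; ring

end Aux

theorem inradius_monotone_under_contraction (n : ℕ) (ι : Type) [Fintype ι]
    (f g : ι → EuclideanSpace ℝ (Fin n))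
    (hcontr : ∀ i j, dist (g i) (g j) ≤ dist (f i) (f j))
    (hball : ∃ q, ∀ i, f i ∈ Metric.closedBall q 1) :
    ∀ r : ℝ, 0 ≤ r →
      (∃ p, Metric.closedBall p r ⊆ ⋂ i, Metric.closedBall (f i) 1) →
      ∃ p', Metric.closedBall p' r ⊆ ⋂ i, Metric.closedBall (g i) 1 := by
  rintro r hr ⟨p, hp⟩
  rcases subsingleton_or_nontrivial (EuclideanSpace ℝ (Fin n)) with hs | hs
  · exact ⟨p, fun y _ => Set.mem_iInter.2 fun i => by
      simp [Metric.mem_closedBall, Subsingleton.elim y (g i)]⟩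
  rcases isEmpty_or_nonempty ι with hι | hι
  · exact ⟨p, fun y _ => Set.mem_iInter.2 fun i => (IsEmpty.false i).elim⟩
  classical
  -- Step 1: dist p (f i) ≤ 1 - r for all i
  have hpf : ∀ i, dist p (f i) ≤ 1 - r := by
    intro i
    have hsub : Metric.closedBall p r ⊆ Metric.closedBall (f i) 1 :=
      hp.trans (Set.iInter_subset _ i)
    obtain ⟨v, hv⟩ := exists_norm_eq (EuclideanSpace ℝ (Fin n)) (zero_le_one (α := ℝ))
    set u : EuclideanSpace ℝ (Fin n) :=
      if p = f i then v else ‖p - f i‖⁻¹ • (p - f i) with hu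
    have hunorm : ‖u‖ = 1 := by
      rw [hu]; split_ifs with h
      · exact hv
      · have hne : p - f i ≠ 0 := sub_ne_zero.2 h
        rw [norm_smul, norm_inv, norm_norm, inv_mul_cancel₀ (norm_ne_zero_iff.2 hne)]
    have hy : p + r • u ∈ Metric.closedBall p r := by
      rw [Metric.mem_closedBall, dist_eq_norm]
      have : p + r • u - p = r • u := by abel
      rw [this, norm_smul, hunorm, Real.norm_of_nonneg hr, mul_one]
    have hmem := hsub hy
    rw [Metric.mem_closedBall, dist_eq_norm] at hmem
    have hkey : ‖p + r • u - f i‖ = dist p (f i) + r := by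
      rw [hu]; split_ifs with h
      · rw [h]
        have h2 : f i + r • v - f i = r • v := by abel
        rw [h2, norm_smul, hv, Real.norm_of_nonneg hr, mul_one, dist_self, zero_add]
      · have hne : p - f i ≠ 0 := sub_ne_zero.2 h
        have hd : (0:ℝ) < ‖p - f i‖ := norm_pos_iff.2 hne
        have e1 : p + r • (‖p - f i‖⁻¹ • (p - f i)) - f i
            = (1 + r * ‖p - f i‖⁻¹) • (p - f i) := by
          rw [smul_smul, add_smul, one_smul]; abel
        rw [e1, norm_smul, Real.norm_of_nonneg (by positivity), dist_eq_norm]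
        field_simp
    rw [hkey] at hmem
    linarith
  have hc1 : 0 ≤ 1 - r := le_trans dist_nonneg (hpf hι.some)
  -- Step 2: maximize the "variance" over the simplex
  set V : (ι → ℝ) → ℝ := fun w => ∑ i, w i * ‖g i - ∑ j, w j • g j‖ ^ 2 with hV
  have hVcont : Continuous V := by
    apply continuous_finset_sum; intro i _
    exact (continuous_apply i).mul (((continuous_const.sub (continuous_finset_sum _
      fun j _ => (continuous_apply j).smul continuous_const)).norm).pow 2)
  obtain ⟨w, hwmem, hwmax⟩ := (isCompact_stdSimplex ℝ ι).exists_isMaxOn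
    ⟨Pi.single hι.some 1, single_mem_stdSimplex ℝ hι.some⟩ hVcont.continuousOn
  have hw0 : ∀ i, 0 ≤ w i := hwmem.1
  have hw1 : ∑ i, w i = 1 := hwmem.2
  set p' : EuclideanSpace ℝ (Fin n) := ∑ j, w j • g j with hp'
  have hV0 : 0 ≤ V w := Finset.sum_nonneg fun j _ => mul_nonneg (hw0 j) (sq_nonneg _)
  -- Claim A: every g i is within √(V w) of p'
  have claimA : ∀ i, ‖g i - p'‖ ^ 2 ≤ V w := by
    intro i
    set D : ℝ := ‖g i - p'‖ ^ 2 with hD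
    by_contra hcon
    push_neg at hcon
    have hDpos : 0 < D := lt_of_le_of_lt hV0 hcon
    set t : ℝ := (D - V w) / (2 * D) with ht
    have ht0 : 0 < t := by
      apply div_pos (by linarith) (by linarith)
    have ht1 : t < 1 := by
      rw [ht, div_lt_one (by linarith)]; linarith
    set wt : ι → ℝ := fun j => (1 - t) * w j + t * (Pi.single i 1 : ι → ℝ) j with hwt
    have hwtmem : wt ∈ stdSimplex ℝ ι := by
      have hconv := (convex_stdSimplex ℝ ι) hwmem (single_mem_stdSimplex ℝ i)
        (by linarith : (0:ℝ) ≤ 1 - t) ht0.le (by ring)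
      have heq : wt = (1 - t) • w + t • (Pi.single i 1 : ι → ℝ) := by
        funext j; simp [hwt, Pi.smul_apply, smul_eq_mul]
      rw [heq]; exact hconv
    have hwtsum : ∑ j, wt j = 1 := hwtmem.2
    have hwtapp : ∀ j, wt j = (1 - t) * w j + t * (Pi.single i 1 : ι → ℝ) j := fun j => rfl
    have hsingle : ∀ (h : ι → ℝ), ∑ j, (Pi.single i 1 : ι → ℝ) j * h j = h i := by
      intro h
      rw [Finset.sum_eq_single i]
      · simp
      · intro b _ hb; simp [Pi.single_apply, hb]
      · intro hni; exact absurd (Finset.mem_univ i) hni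
    have hsingle2 : ∑ j, (Pi.single i 1 : ι → ℝ) j • g j = g i := by
      rw [Finset.sum_eq_single i]
      · simp
      · intro b _ hb; simp [Pi.single_apply, hb]
      · intro hni; exact absurd (Finset.mem_univ i) hni
    have hcenter : ∑ j, wt j • g j = p' + t • (g i - p') := by
      have : ∑ j, wt j • g j = (1 - t) • p' + t • g i := by
        simp only [hwtapp, add_smul, Finset.sum_add_distrib, mul_smul]
        rw [← Finset.smul_sum, ← Finset.smul_sum, hsingle2, hp']
      rw [this, smul_sub]; module
    have hlhs : ∑ j, wt j * ‖g j - p'‖ ^ 2 = (1 - t) * V w + t * D := by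
      simp only [hwtapp, add_mul, Finset.sum_add_distrib, mul_assoc]
      rw [← Finset.mul_sum, ← Finset.mul_sum, hsingle (fun j => ‖g j - p'‖ ^ 2), hV, hD]
    have hnc : ‖(∑ j, wt j • g j) - p'‖ ^ 2 = t ^ 2 * D := by
      rw [hcenter]
      have : p' + t • (g i - p') - p' = t • (g i - p') := by abel
      rw [this, norm_smul, Real.norm_of_nonneg ht0.le, mul_pow, hD]
    have hpa := aux_pa wt hwtsum g p'
    have hVwt : V wt = (1 - t) * V w + t * D - t ^ 2 * D := by
      have hVwt' : V wt = ∑ j, wt j * ‖g j - ∑ k, wt k • g k‖ ^ 2 := rfl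
      rw [hlhs, hnc] at hpa
      rw [hVwt']; linarith
    have hle : V wt ≤ V w := hwmax hwtmem
    have htD : t * D = (D - V w) / 2 := by
      rw [ht]; field_simp
    nlinarith [mul_pos ht0 hDpos]
  -- Claim B: V w ≤ (1 - r)^2
  have claimB : V w ≤ (1 - r) ^ 2 := by
    have h2V : ∑ i, w i * (∑ j, w j * ‖g i - g j‖ ^ 2) = 2 * V w := aux_double w hw1 g
    have h2Vf : ∑ i, w i * (∑ j, w j * ‖f i - f j‖ ^ 2)
        = 2 * ∑ i, w i * ‖f i - ∑ j, w j • f j‖ ^ 2 := aux_double w hw1 f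
    have hmono : ∑ i, w i * (∑ j, w j * ‖g i - g j‖ ^ 2)
        ≤ ∑ i, w i * (∑ j, w j * ‖f i - f j‖ ^ 2) := by
      refine Finset.sum_le_sum fun i _ => mul_le_mul_of_nonneg_left
        (Finset.sum_le_sum fun j _ => mul_le_mul_of_nonneg_left ?_ (hw0 j)) (hw0 i)
      have := hcontr i j
      rw [dist_eq_norm, dist_eq_norm] at this
      exact pow_le_pow_left₀ (norm_nonneg _) this 2
    have hVfp : ∑ i, w i * ‖f i - p‖ ^ 2 ≤ (1 - r) ^ 2 := by
      calc ∑ i, w i * ‖f i - p‖ ^ 2 ≤ ∑ i, w i * (1 - r) ^ 2 := by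
            refine Finset.sum_le_sum fun i _ => mul_le_mul_of_nonneg_left ?_ (hw0 i)
            refine pow_le_pow_left₀ (norm_nonneg _) ?_ 2
            rw [← dist_eq_norm, dist_comm]
            exact hpf i
        _ = (1 - r) ^ 2 := by rw [← Finset.sum_mul, hw1, one_mul]
    have hpaf := aux_pa w hw1 f p
    nlinarith [sq_nonneg ‖(∑ j, w j • f j) - p‖]
  -- Conclusion
  refine ⟨p', fun y hy => Set.mem_iInter.2 fun i => ?_⟩
  have h1 : ‖g i - p'‖ ≤ 1 - r := by
    nlinarith [claimA i, claimB, norm_nonneg (g i - p')]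
  rw [Metric.mem_closedBall]
  have htri : dist y (g i) ≤ dist y p' + dist p' (g i) := dist_triangle _ _ _
  have h2 : dist p' (g i) ≤ 1 - r := by
    rw [dist_eq_norm, norm_sub_rev]; exact h1
  have hyp : dist y p' ≤ r := hy
  linarith
end
end

section
/- Let n ≥ 2, let X ⊆ ℝⁿ be a nonempty set of diameter at most 1, and let z be a point in the topological boundary of B[X] = ⋂_{x ∈ X} {y : ‖y − x‖ ≤ 1}. Then the Gauss image of z has spherical diameter at most π/3; that is, for any two unit vectors v₁, v₂ that are inward normals of hyperplanes supporting B[X] at z (i.e. ⟨vᵢ, y − z⟩ ≥ 0 for all y ∈ B[X], i = 1, 2), one has ⟨v₁, v₂⟩ ≥ 1/2. -/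
noncomputable section

lemma mem_ballInter_iff {n : ℕ} {X : Set (EuclideanSpace ℝ (Fin n))}
    {y : EuclideanSpace ℝ (Fin n)} :
    y ∈ ballInter X ↔ ∀ x ∈ X, ‖y - x‖ ≤ 1 := by
  simp [ballInter, Metric.mem_closedBall, dist_eq_norm]

lemma le_one_of_sq_le_one {a : ℝ} (h0 : 0 ≤ a) (h1 : a ^ 2 ≤ 1) : a ≤ 1 := by
  nlinarith

lemma sq_le_one_of_le_one {a : ℝ} (h0 : 0 ≤ a) (h1 : a ≤ 1) : a ^ 2 ≤ 1 := by
  nlinarith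

lemma numKey (d s h k : ℝ) (hs0 : 0 ≤ s) (hslt : s < d ^ 2 / 2)
    (hhpos : 0 < h) (hkpos : 0 < k) (hd0 : 0 < d)
    (hh2 : h ^ 2 = 1 - d ^ 2 / 4) (hdk : d ^ 2 * k ^ 2 = d ^ 2 - s ^ 2) :
    2 * s * h < d ^ 2 * k := by
  have e1 : (2 * s * h) ^ 2 = 4 * s ^ 2 - s ^ 2 * d ^ 2 := by
    linear_combination (4 * s ^ 2) * hh2
  have e2 : (d ^ 2 * k) ^ 2 = d ^ 2 * d ^ 2 - d ^ 2 * s ^ 2 := by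
    linear_combination d ^ 2 * hdk
  have hfac : 0 < (d ^ 2 - 2 * s) * (d ^ 2 + 2 * s) :=
    mul_pos (by linarith) (by nlinarith)
  by_contra hcon
  push_neg at hcon
  have h3 : 0 ≤ 2 * s * h - d ^ 2 * k := sub_nonneg.mpr hcon
  have h4 : 0 < d ^ 2 * k := by positivity
  nlinarith [mul_nonneg h3 (by nlinarith : (0:ℝ) ≤ 2 * s * h + d ^ 2 * k)]

lemma numF4 (d h m ε τ : ℝ) (hh2 : h ^ 2 = 1 - d ^ 2 / 4) (hτ : τ = ε * m)
    (hε0 : 0 < ε)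
    (hεg : ε * (m ^ 2 * h ^ 2 + d ^ 2 / 4) ≤ d ^ 2 / 2 - 2 * m * h ^ 2) :
    ((ε - 1) / 2) ^ 2 * d ^ 2 + (-((1 + τ) * h)) ^ 2 ≤ 1 := by
  subst hτ
  nlinarith [mul_le_mul_of_nonneg_left hεg hε0.le]

lemma numF6 (s h k m ε : ℝ) (hε0 : 0 < ε) (hs2m : s < 2 * (m * h * k)) :
    ε / 2 * s + -(ε * m * h) * k < 0 := by
  nlinarith [mul_lt_mul_of_pos_left hs2m hε0]

set_option maxHeartbeats 1000000 in
/-- Key supporting-ball property: if `v` is a unit inward normal to `B[X]` at `z ∈ B[X]`,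
then `⟨v, y - z⟩ ≥ ‖y - z‖²/2` for all `y ∈ B[X]`. -/
lemma key {n : ℕ} {X : Set (EuclideanSpace ℝ (Fin n))} (hne : X.Nonempty)
    {z : EuclideanSpace ℝ (Fin n)} (hzK : z ∈ ballInter X)
    {v : EuclideanSpace ℝ (Fin n)} (hv : ‖v‖ = 1)
    (hnv : ∀ y ∈ ballInter X, 0 ≤ (inner ℝ v (y - z) : ℝ)) :
    ∀ y ∈ ballInter X, ‖y - z‖ ^ 2 / 2 ≤ (inner ℝ v (y - z) : ℝ) := by
  intro y hy
  by_contra hlt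
  push_neg at hlt
  set w : EuclideanSpace ℝ (Fin n) := y - z with hw
  set s : ℝ := inner ℝ v w with hsdef
  set d : ℝ := ‖w‖ with hd
  have hs0 : 0 ≤ s := hnv y hy
  have hslt : s < d ^ 2 / 2 := hlt
  have hy_eq : y = z + w := by rw [hw]; abel
  obtain ⟨x₀, hx₀⟩ := hne
  have hzx : ‖z - x₀‖ ≤ 1 := mem_ballInter_iff.mp hzK x₀ hx₀
  have hyx : ‖y - x₀‖ ≤ 1 := mem_ballInter_iff.mp hy x₀ hx₀
  have hd2 : d ≤ 2 := by
    have h1 : w = (y - x₀) + (x₀ - z) := by rw [hw]; abel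
    have h2 : ‖w‖ ≤ ‖y - x₀‖ + ‖x₀ - z‖ := by rw [h1]; exact norm_add_le _ _
    have h3 : ‖x₀ - z‖ = ‖z - x₀‖ := norm_sub_rev _ _
    rw [hd]; linarith
  have hdnn : 0 ≤ d := hd ▸ norm_nonneg w
  have hd0 : 0 < d := by
    rcases hdnn.lt_or_eq with hlt0 | heq0
    · exact hlt0
    · exfalso; rw [← heq0] at hslt; norm_num at hslt; linarith
  have hww : (inner ℝ w w : ℝ) = d ^ 2 := by rw [real_inner_self_eq_norm_sq, hd]
  have hvv : (inner ℝ v v : ℝ) = 1 := by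
    simpa [hv] using real_inner_self_eq_norm_sq v
  have hvw : (inner ℝ v w : ℝ) = s := hsdef.symm
  have hwv : (inner ℝ w v : ℝ) = s := (real_inner_comm v w).trans hvw
  clear_value w s d
  rcases lt_or_eq_of_le hd2 with hdlt | hdeq
  · -- main case d < 2
    have hsd : s < d := by
      have hprod := mul_pos hd0 (by linarith : (0:ℝ) < 2 - d)
      nlinarith [hprod, hslt]
    have hd24 : d ^ 2 < 4 := by
      have := pow_lt_pow_left₀ hdlt hdnn (two_ne_zero)
      norm_num at this; exact this
    set h : ℝ := Real.sqrt (1 - d ^ 2 / 4) with hhdef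
    have hh2 : h ^ 2 = 1 - d ^ 2 / 4 := Real.sq_sqrt (by linarith)
    have hhpos : 0 < h := Real.sqrt_pos.mpr (by linarith)
    clear_value h
    set k : ℝ := Real.sqrt (1 - s ^ 2 / d ^ 2) with hkdef
    have hsdd : s ^ 2 / d ^ 2 < 1 := by
      rw [div_lt_one (by positivity)]
      exact pow_lt_pow_left₀ hsd hs0 two_ne_zero
    have hk2 : k ^ 2 = 1 - s ^ 2 / d ^ 2 := Real.sq_sqrt (by linarith)
    have hkpos : 0 < k := Real.sqrt_pos.mpr (by linarith)
    have hk0 : k ≠ 0 := hkpos.ne'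
    clear_value k
    have hdk : d ^ 2 * k ^ 2 = d ^ 2 - s ^ 2 := by
      rw [hk2]; field_simp
    have key1 : 2 * s * h < d ^ 2 * k := numKey d s h k hs0 hslt hhpos hkpos hd0 hh2 hdk
    set m : ℝ := (2 * s * h + d ^ 2 * k) / (8 * h ^ 2 * k) with hmdef
    have hmpos : 0 < m := by
      apply div_pos
      · have h5 : 0 < d ^ 2 * k := by positivity
        have h6 : 0 ≤ 2 * s * h := by positivity
        linarith
      · positivity
    have hg : 0 < d ^ 2 / 2 - 2 * m * h ^ 2 := by
      have hm4 : 2 * m * h ^ 2 = (2 * s * h + d ^ 2 * k) / (4 * k) := by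
        rw [hmdef]; field_simp; ring
      rw [hm4, sub_pos, div_lt_iff₀ (by positivity)]
      linarith [key1]
    have hmhk : 2 * (m * h * k) = (2 * s * h + d ^ 2 * k) / (4 * h) := by
      rw [hmdef]; field_simp; ring
    clear_value m
    have hDpos : 0 < m ^ 2 * h ^ 2 + d ^ 2 / 4 := by positivity
    set ε : ℝ := min 1 ((d ^ 2 / 2 - 2 * m * h ^ 2) / (m ^ 2 * h ^ 2 + d ^ 2 / 4))
      with hεdef
    have hεpos : 0 < ε := lt_min one_pos (div_pos hg hDpos)
    have hεle : ε ≤ (d ^ 2 / 2 - 2 * m * h ^ 2) / (m ^ 2 * h ^ 2 + d ^ 2 / 4) :=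
      min_le_right _ _
    have hεg : ε * (m ^ 2 * h ^ 2 + d ^ 2 / 4) ≤ d ^ 2 / 2 - 2 * m * h ^ 2 :=
      (le_div_iff₀ hDpos).mp hεle
    have hε1 : ε ≤ 1 := min_le_left _ _
    clear_value ε
    set τ : ℝ := ε * m with hτdef
    have hτpos : 0 < τ := mul_pos hεpos hmpos
    clear_value τ
    -- vectors
    set E : EuclideanSpace ℝ (Fin n) := v - (s / d ^ 2) • w with hEdef
    have hEw : (inner ℝ E w : ℝ) = 0 := by
      rw [hEdef, inner_sub_left, real_inner_smul_left, hww, hvw]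
      field_simp
      ring
    have hwE : (inner ℝ w E : ℝ) = 0 := by rw [real_inner_comm]; exact hEw
    have hvE : (inner ℝ v E : ℝ) = k ^ 2 := by
      rw [hEdef, inner_sub_right, real_inner_smul_right, hvv, hvw, hk2]
      field_simp
    have hEv : (inner ℝ E v : ℝ) = k ^ 2 := by rw [real_inner_comm]; exact hvE
    have hEE : (inner ℝ E E : ℝ) = k ^ 2 := by
      rw [hEdef, inner_sub_right, real_inner_smul_right, hEv, hEw]
      ring
    set e : EuclideanSpace ℝ (Fin n) := k⁻¹ • E with hedef
    clear_value E
    have hew : (inner ℝ e w : ℝ) = 0 := by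
      rw [hedef, real_inner_smul_left, hEw]; ring
    have hwe : (inner ℝ w e : ℝ) = 0 := by rw [real_inner_comm]; exact hew
    have hve : (inner ℝ v e : ℝ) = k := by
      rw [hedef, real_inner_smul_right, hvE, sq, inv_mul_cancel_left₀ hk0]
    have hee : (inner ℝ e e : ℝ) = 1 := by
      rw [hedef, real_inner_smul_left, real_inner_smul_right, hEE, sq,
        inv_mul_cancel_left₀ hk0, inv_mul_cancel₀ hk0]
    clear_value e
    have hnorm2 : ∀ α β : ℝ, ‖α • w + β • e‖ ^ 2 = α ^ 2 * d ^ 2 + β ^ 2 := by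
      intro α β
      rw [← real_inner_self_eq_norm_sq]
      simp only [inner_add_left, inner_add_right, real_inner_smul_left,
        real_inner_smul_right, hww, hee, hwe, hew]
      ring
    have hvcomb : ∀ α β : ℝ, (inner ℝ v (α • w + β • e) : ℝ) = α * s + β * k := by
      intro α β
      simp only [inner_add_right, real_inner_smul_right, hvw, hve]
    set c : EuclideanSpace ℝ (Fin n) := z + ((1:ℝ) / 2) • w + h • e with hcdef
    have hzc_eq : z - c = (-(1 / 2) : ℝ) • w + (-h) • e := by
      rw [hcdef]; module
    have hyc_eq : y - c = ((1 / 2) : ℝ) • w + (-h) • e := by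
      rw [hcdef, hy_eq]; module
    have hzc1 : ‖z - c‖ ^ 2 = 1 := by
      rw [hzc_eq, hnorm2]; linear_combination hh2
    have hyc1 : ‖y - c‖ ^ 2 = 1 := by
      rw [hyc_eq, hnorm2]; linear_combination hh2
    set a : ℝ := (2 + τ - ε) / 2 with hadef
    set b : ℝ := (τ + ε) / 2 with hbdef
    have ha : 0 ≤ a := by rw [hadef]; linarith
    have hb : 0 ≤ b := by rw [hbdef]; linarith
    have hab : a + b = 1 + τ := by rw [hadef, hbdef]; ring
    set p : EuclideanSpace ℝ (Fin n) :=
      z + (ε / 2 : ℝ) • w + (-(τ * h)) • e with hpdef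
    have hpz_eq : p - z = (ε / 2 : ℝ) • w + (-(τ * h)) • e := by
      rw [hpdef]; abel
    have hpc_eq : p - c = a • (z - c) + b • (y - c) := by
      rw [hzc_eq, hyc_eq, hpdef, hcdef, hadef, hbdef]
      match_scalars <;> ring
    have hpc_eq2 : p - c = ((ε - 1) / 2 : ℝ) • w + (-((1 + τ) * h)) • e := by
      rw [hpdef, hcdef]
      match_scalars <;> ring
    clear_value a b c p
    have hpc1 : ‖p - c‖ ^ 2 ≤ 1 := by
      rw [hpc_eq2, hnorm2]
      exact numF4 d h m ε τ hh2 hτdef hεpos hεg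
    -- p ∈ B[X]
    have hpK : p ∈ ballInter X := by
      rw [mem_ballInter_iff]
      intro x hx
      have hxz : ‖z - x‖ ≤ 1 := mem_ballInter_iff.mp hzK x hx
      have hxy : ‖y - x‖ ≤ 1 := mem_ballInter_iff.mp hy x hx
      set q : EuclideanSpace ℝ (Fin n) := x - c with hqdef
      have hq1 : ‖q‖ ^ 2 / 2 ≤ (inner ℝ q (z - c) : ℝ) := by
        have e1 : x - z = q - (z - c) := by rw [hqdef]; abel
        have e2 : ‖x - z‖ ^ 2 = ‖q‖ ^ 2 - 2 * inner ℝ q (z - c) + ‖z - c‖ ^ 2 := by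
          rw [e1]; exact norm_sub_sq_real _ _
        have e3 : ‖x - z‖ ^ 2 ≤ 1 := by
          apply sq_le_one_of_le_one (norm_nonneg _)
          rw [norm_sub_rev]; exact hxz
        linarith
      have hq2 : ‖q‖ ^ 2 / 2 ≤ (inner ℝ q (y - c) : ℝ) := by
        have e1 : x - y = q - (y - c) := by rw [hqdef]; abel
        have e2 : ‖x - y‖ ^ 2 = ‖q‖ ^ 2 - 2 * inner ℝ q (y - c) + ‖y - c‖ ^ 2 := by
          rw [e1]; exact norm_sub_sq_real _ _
        have e3 : ‖x - y‖ ^ 2 ≤ 1 := by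
          apply sq_le_one_of_le_one (norm_nonneg _)
          rw [norm_sub_rev]; exact hxy
        linarith
      have hqpc : ‖q‖ ^ 2 / 2 ≤ (inner ℝ q (p - c) : ℝ) := by
        rw [hpc_eq, inner_add_right, real_inner_smul_right, real_inner_smul_right]
        have t1 : a * (‖q‖ ^ 2 / 2) ≤ a * inner ℝ q (z - c) :=
          mul_le_mul_of_nonneg_left hq1 ha
        have t2 : b * (‖q‖ ^ 2 / 2) ≤ b * inner ℝ q (y - c) :=
          mul_le_mul_of_nonneg_left hq2 hb
        have hab2 : a * (‖q‖ ^ 2 / 2) + b * (‖q‖ ^ 2 / 2)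
            = (1 + τ) * (‖q‖ ^ 2 / 2) := by linear_combination (‖q‖ ^ 2 / 2) * hab
        have ht : 0 ≤ τ * (‖q‖ ^ 2 / 2) := by positivity
        linarith
      have e4 : p - x = (p - c) - q := by rw [hqdef]; abel
      have e5 : ‖p - x‖ ^ 2 = ‖p - c‖ ^ 2 - 2 * inner ℝ (p - c) q + ‖q‖ ^ 2 := by
        rw [e4]; exact norm_sub_sq_real _ _
      have e6 : (inner ℝ (p - c) q : ℝ) = inner ℝ q (p - c) := real_inner_comm _ _
      have e7 : ‖p - x‖ ^ 2 ≤ 1 := by rw [e5, e6]; linarith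
      exact le_one_of_sq_le_one (norm_nonneg _) e7
    -- contradiction
    have hfin := hnv p hpK
    rw [hpz_eq, hvcomb] at hfin
    have hs2m : s < 2 * (m * h * k) := by
      rw [hmhk, lt_div_iff₀ (by positivity)]
      linarith [key1]
    have hneg := numF6 s h k m ε hεpos hs2m
    rw [hτdef] at hfin
    linarith [hneg, hfin]
  · -- degenerate case d = 2
    have hmid : ∀ x ∈ X, y - x = x - z := by
      intro x hx
      have hxz : ‖z - x‖ ≤ 1 := mem_ballInter_iff.mp hzK x hx
      have hxy : ‖y - x‖ ≤ 1 := mem_ballInter_iff.mp hy x hx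
      have p1 := norm_sub_sq_real (y - x) (x - z)
      have p2 := norm_add_sq_real (y - x) (x - z)
      have e2 : (y - x) + (x - z) = w := by rw [hw]; abel
      have n1 : ‖y - x‖ ^ 2 ≤ 1 := sq_le_one_of_le_one (norm_nonneg _) hxy
      have n2 : ‖x - z‖ ^ 2 ≤ 1 := by
        apply sq_le_one_of_le_one (norm_nonneg _)
        rw [norm_sub_rev]; exact hxz
      have n3 : ‖(y - x) + (x - z)‖ ^ 2 = 4 := by
        rw [e2, ← hd, hdeq]; norm_num
      have e4 : ‖(y - x) - (x - z)‖ ^ 2 ≤ 0 := by linarith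
      have e5 : ‖(y - x) - (x - z)‖ ^ 2 = 0 :=
        le_antisymm e4 (by positivity)
      have e6 : ‖(y - x) - (x - z)‖ = 0 := by
        exact pow_eq_zero_iff two_ne_zero |>.mp e5
      exact sub_eq_zero.mp (norm_eq_zero.mp e6)
    set p : EuclideanSpace ℝ (Fin n) := z + ((1:ℝ) / 2) • w - v with hpdef
    have hpK : p ∈ ballInter X := by
      rw [mem_ballInter_iff]
      intro x hx
      have hkey : p - x = ((1:ℝ) / 2) • ((y - x) - (x - z)) - v := by
        rw [hpdef, hw]; module
      rw [hmid x hx, sub_self, smul_zero, zero_sub] at hkey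
      rw [hkey, norm_neg, hv]
    have hfin := hnv p hpK
    have hpz : p - z = ((1:ℝ) / 2) • w - v := by rw [hpdef]; abel
    rw [hpz, inner_sub_right, real_inner_smul_right, hvw, hvv] at hfin
    have hd4 : d ^ 2 = 4 := by rw [hdeq]; norm_num
    linarith

theorem gauss_image_spherical_diameter (n : ℕ) (hn : 2 ≤ n)
    (X : Set (EuclideanSpace ℝ (Fin n))) (hne : X.Nonempty)
    (hdiam : ∀ x ∈ X, ∀ y ∈ X, dist x y ≤ 1)
    (z : EuclideanSpace ℝ (Fin n)) (hz : z ∈ frontier (ballInter X))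
    (v₁ v₂ : EuclideanSpace ℝ (Fin n)) (hv₁ : ‖v₁‖ = 1) (hv₂ : ‖v₂‖ = 1)
    (hn₁ : ∀ y ∈ ballInter X, 0 ≤ (inner ℝ v₁ (y - z) : ℝ))
    (hn₂ : ∀ y ∈ ballInter X, 0 ≤ (inner ℝ v₂ (y - z) : ℝ)) :
    (1 : ℝ) / 2 ≤ (inner ℝ v₁ (v₂) : ℝ) := by
  have hcl : IsClosed (ballInter X) :=
    isClosed_biInter fun x _ => Metric.isClosed_closedBall
  have hzK : z ∈ ballInter X := by
    have h1 := frontier_subset_closure (s := ballInter X) hz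
    rwa [hcl.closure_eq] at h1
  have hXK : X ⊆ ballInter X := by
    intro x hx
    rw [mem_ballInter_iff]
    intro x' hx'
    rw [← dist_eq_norm]
    exact hdiam x hx x' hx'
  have hB1 := key hne hzK hv₁ hn₁
  have hB2 := key hne hzK hv₂ hn₂
  have hp1 : z + v₁ ∈ ballInter X := by
    rw [mem_ballInter_iff]
    intro x hx
    have hB := hB1 x (hXK hx)
    have e1 : z + v₁ - x = v₁ - (x - z) := by abel
    have e2 : ‖v₁ - (x - z)‖ ^ 2 = ‖v₁‖ ^ 2 - 2 * inner ℝ v₁ (x - z) + ‖x - z‖ ^ 2 :=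
      norm_sub_sq_real _ _
    rw [e1]
    apply le_one_of_sq_le_one (norm_nonneg _)
    rw [e2, hv₁]
    linarith
  have hfinal := hB2 (z + v₁) hp1
  have e3 : z + v₁ - z = v₁ := by abel
  rw [e3, hv₁] at hfinal
  rw [real_inner_comm] at hfinal
  linarith
end
end
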